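/- For any ideal J of a commutative ring R, the annihilator Ann(J) = {r ∈ R : rJ = 0} is a countable strongly annihilated ideal of R, provided Ann(J) ≠ R. -/
import Mathlib

/-- An ideal `I` is countable strongly annihilated if for each countable subset `S ⊆ I`
and each `b ∉ I` there exists `c` with `c * a = 0` for all `a ∈ S` but `c * b ≠ 0`. -/
def CountableStronglyAnnihilated {R : Type*} [CommRing R] (I : Ideal R) : Prop :=
  ∀ S : Set R, S.Countable → S ⊆ I → ∀ b ∉ I, ∃ c : R, (∀ a ∈ S, c * a = 0) ∧ c * b ≠ 0

/-- The annihilator of any ideal, if proper, is countable strongly annihilated. -/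
theorem stmt4 {R : Type*} [CommRing R] (J : Ideal R)
    (h : Submodule.annihilator J ≠ ⊤) :
    CountableStronglyAnnihilated (Submodule.annihilator J) := by
  intro S _ hS b hb
  rw [Submodule.mem_annihilator] at hb
  push_neg at hb
  obtain ⟨j, hjJ, hj⟩ := hb
  refine ⟨j, fun a ha => ?_, ?_⟩
  · have := Submodule.mem_annihilator.mp (hS ha) j hjJ
    simpa [mul_comm] using this
  · simpa [mul_comm] using hj
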